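/- Let q ≥ 2 be a real number, σ > 0, ψ : E → ℝ, x ∈ E and v ∈ E such that ψ(y) ≥ ψ(x) + ⟨v, y − x⟩ + (σ/q)·‖y − x‖^q for all y ∈ E. Then inf_{y ∈ E} ψ(y) ≥ ψ(x) − ((q−1)/q)·(1/σ)^{1/(q−1)}·‖v‖^{q/(q−1)}. -/

import Mathlib

open scoped RealInnerProductSpace

variable {E : Type*} [NormedAddCommGroup E] [InnerProductSpace ℝ E] [FiniteDimensional ℝ E]

/-- If `ψ` dominates the uniformly convex lower model
`y ↦ ψ(x) + ⟨v, y-x⟩ + (σ/q)‖y-x‖^q`, then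
`inf ψ ≥ ψ(x) - ((q-1)/q)(1/σ)^{1/(q-1)}‖v‖^{q/(q-1)}`. -/
theorem uniformly_convex_lower_bound_on_inf
    (q σ : ℝ) (hq : 2 ≤ q) (hσ : 0 < σ)
    (ψ : E → ℝ) (x v : E)
    (hyp : ∀ y : E, ψ x + ⟪v, y - x⟫ + σ / q * ‖y - x‖ ^ q ≤ ψ y) :
    ∀ y : E,
      ψ x - (q - 1) / q * (1 / σ) ^ (1 / (q - 1)) * ‖v‖ ^ (q / (q - 1)) ≤ ψ y := by
  intro y
  have h := hyp y
  set t : ℝ := ‖y - x‖ with ht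
  have hq0 : (0:ℝ) < q := by linarith
  have hq1 : (0:ℝ) < q - 1 := by linarith
  have hs : (0:ℝ) < 1 / σ := by positivity
  set s : ℝ := 1 / σ with hsdef
  have ht0 : 0 ≤ t := norm_nonneg _
  have hconj : (q / (q - 1)).HolderConjugate q := by
    refine Real.holderConjugate_iff.mpr ⟨?_, ?_⟩
    · rw [lt_div_iff₀ hq1]; linarith
    · field_simp; ring
  -- Young's inequality with a = ‖v‖ * s^(1/q), b = t * s^(-(1/q))
  have ha : (0:ℝ) ≤ ‖v‖ * s ^ (1/q) := by positivity
  have hb : (0:ℝ) ≤ t * s ^ (-(1/q)) := by positivity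
  have young := Real.young_inequality_of_nonneg ha hb hconj
  have hss : s ^ (1/q) * s ^ (-(1/q)) = 1 := by
    rw [← Real.rpow_add hs]; simp
  have hab : (‖v‖ * s ^ (1/q)) * (t * s ^ (-(1/q))) = ‖v‖ * t := by
    calc (‖v‖ * s ^ (1/q)) * (t * s ^ (-(1/q)))
        = ‖v‖ * t * (s ^ (1/q) * s ^ (-(1/q))) := by ring
      _ = ‖v‖ * t := by rw [hss, mul_one]
  have hA : (‖v‖ * s ^ (1/q)) ^ (q/(q-1)) = ‖v‖ ^ (q/(q-1)) * s ^ (1/(q-1)) := by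
    rw [Real.mul_rpow (norm_nonneg v) (le_of_lt (Real.rpow_pos_of_pos hs _)),
      ← Real.rpow_mul hs.le]
    congr 1
    field_simp
  have hB : (t * s ^ (-(1/q))) ^ q = t ^ q * σ := by
    have h1 : s ^ (-(1/q)) = σ ^ (1/q) := by
      rw [hsdef, one_div, Real.inv_rpow hσ.le, Real.rpow_neg hσ.le, inv_inv]
    rw [h1, Real.mul_rpow ht0 (Real.rpow_pos_of_pos hσ _).le, ← Real.rpow_mul hσ.le,
      one_div, inv_mul_cancel₀ hq0.ne', Real.rpow_one]
  have key : ‖v‖ * t ≤ (q - 1) / q * s ^ (1 / (q - 1)) * ‖v‖ ^ (q / (q - 1)) + σ / q * t ^ q := by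
    rw [hab, hA, hB] at young
    have h1 : ‖v‖ ^ (q/(q-1)) * s ^ (1/(q-1)) / (q/(q-1)) =
        (q - 1) / q * s ^ (1 / (q - 1)) * ‖v‖ ^ (q / (q - 1)) := by
      rw [div_div_eq_mul_div]
      ring
    have h2 : t ^ q * σ / q = σ / q * t ^ q := by ring
    rw [h1, h2] at young
    exact young
  have hinner : -(‖v‖ * t) ≤ ⟪v, y - x⟫ := by
    have := abs_real_inner_le_norm v (y - x)
    rw [← ht] at this
    linarith [neg_abs_le ⟪v, y - x⟫]
  linarith
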